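/- Let V be unimodular admissible and α ∈ ℤ^d \ {0}, and set U_α = {v ∈ V : α·v ≠ 0}. If D^β B̂_V(α) ≠ 0 for some multi-index β with |β| = ϱ_V + 1 and #U_α ≥ ϱ_V + 1, then #U_α = ϱ_V + 1. -/

import Mathlib

open MeasureTheory Complex Finset
open scoped Real Classical

noncomputable section

/-- `g(t) = (1 - e^{-2πit})/(2πit)` with `g(0) = 1`. -/
def gfun (t : ℝ) : ℂ :=
  if t = 0 then 1 else
    (1 - Complex.exp (-2 * Real.pi * Complex.I * t)) / (2 * Real.pi * Complex.I * t)

variable {d : ℕ} {ι : Type*}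

/-- dot product of an integer vector with a real vector -/
def dotIR (α : Fin d → ℤ) (x : Fin d → ℝ) : ℝ := ∑ i, (α i : ℝ) * x i

/-- integer dot product -/
def dotII (α w : Fin d → ℤ) : ℤ := ∑ i, α i * w i

/-- cast of an integer vector to a real vector -/
def castV (v : Fin d → ℤ) : Fin d → ℝ := fun i => (v i : ℝ)

/-- `V` (indexed by the finset `V` via `v`) consists of nonzero integer vectors spanning `ℝ^d` -/
def Admissible (V : Finset ι) (v : ι → Fin d → ℤ) : Prop :=
  (∀ j ∈ V, v j ≠ 0) ∧
    Submodule.span ℝ ((fun j => castV (v j)) '' (V : Set ι)) = ⊤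

/-- `ϱ_V` : the largest `r` such that deleting any `r` vectors leaves a spanning set. -/
def rhoV (V : Finset ι) (v : ι → Fin d → ℤ) : ℕ :=
  sSup {r : ℕ | ∀ W ⊆ V, W.card = r →
    Submodule.span ℝ ((fun j => castV (v j)) '' ((V \ W : Finset ι) : Set ι)) = ⊤}

/-- membership in the family `Λ` -/
def InLambda (V : Finset ι) (v : ι → Fin d → ℤ) (U : Finset ι) : Prop :=
  U ⊆ V ∧ U.card = rhoV V v + 1 ∧
    Submodule.span ℝ ((fun j => castV (v j)) '' ((V \ U : Finset ι) : Set ι)) ≠ ⊤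

/-- unimodularity: every `d`-subfamily has determinant of absolute value at most 1 -/
def Unimodular (V : Finset ι) (v : ι → Fin d → ℤ) : Prop :=
  ∀ w : Fin d → ι, Function.Injective w → (∀ i, w i ∈ V) →
    |Matrix.det (fun i k => v (w i) k)| ≤ 1

/-- the Fourier transform of the box spline, `∏_{v∈V} g(x⋅v)` -/
def hatB (V : Finset ι) (v : ι → Fin d → ℤ) (x : Fin d → ℝ) : ℂ :=
  ∏ j ∈ V, gfun (dotIR (v j) x)

/-- partial derivative in direction `i` -/
def pderivC (i : Fin d) (f : (Fin d → ℝ) → ℂ) : (Fin d → ℝ) → ℂ :=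
  fun x => fderiv ℝ f x (Pi.single i 1)

/-- `D^β`, the multi-index partial derivative -/
def Dmulti (β : Fin d → ℕ) (f : (Fin d → ℝ) → ℂ) : (Fin d → ℝ) → ℂ :=
  (List.finRange d).foldr (fun i F => (pderivC i)^[β i] F) f

/-- directional derivative `D_w` -/
def dirDeriv (w : Fin d → ℝ) (f : (Fin d → ℝ) → ℂ) : (Fin d → ℝ) → ℂ :=
  fun x => fderiv ℝ f x w

/-- `D_U = ∏_{v∈U} D_v` (real vectors version) -/
def DUder (U : Finset ι) (v : ι → Fin d → ℝ) (f : (Fin d → ℝ) → ℂ) : (Fin d → ℝ) → ℂ :=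
  U.toList.foldr (fun j F => dirDeriv (v j) F) f

/-- the `k`-th Bernoulli function `B^k(t) = ∑_{n≠0} e^{2πint}/(2πin)^k` -/
def Bern (k : ℕ) (t : ℝ) : ℂ :=
  ∑' n : ℤ, if n = 0 then 0 else
    Complex.exp (2 * Real.pi * Complex.I * n * t) / (2 * Real.pi * Complex.I * n) ^ k

/-- the Bernoulli spline `B(V,U)` -/
def BVU (V U : Finset ι) (v : ι → Fin d → ℤ) (x : Fin d → ℝ) : ℂ :=
  ∑' α : Fin d → ℤ,
    if α ≠ 0 ∧ ∀ j ∈ V \ U, dotII α (v j) = 0 then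
      (∏ j ∈ U, (1 : ℂ) / (2 * Real.pi * Complex.I * (dotII α (v j) : ℤ))) *
        Complex.exp (2 * Real.pi * Complex.I * dotIR α x)
    else 0

/-- the homogeneous polynomial `x ↦ ∏_{v∈U}(x⋅v)` (real vectors version) -/
def polyU (U : Finset ι) (v : ι → Fin d → ℝ) (x : Fin d → ℝ) : ℂ :=
  ∏ j ∈ U, ((∑ i, x i * v j i : ℝ) : ℂ)

/-- `C(β,U) = D^β (∏_{v∈U} (x⋅v))`, a constant (evaluated at `0`) -/
def Cconst (U : Finset ι) (v : ι → Fin d → ℤ) (β : Fin d → ℕ) : ℂ :=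
  Dmulti β (polyU U fun j => castV (v j)) 0

/-- `L_β`, given by its Fourier expansion (Lemma 2.1);
equals `P([]^β) - []^β` for the box-spline orthogonal projection `P`. -/
def Lfun (V : Finset ι) (v : ι → Fin d → ℤ) (β : Fin d → ℕ) (x : Fin d → ℝ) : ℂ :=
  (1 / (2 * Real.pi * Complex.I)) ^ (∑ i, β i) *
    ∑' α : Fin d → ℤ, if α ≠ 0 then
      Dmulti β (hatB V v) (castV α) *
        Complex.exp (2 * Real.pi * Complex.I * dotIR α x)
    else 0

/-- the unit cube in `ℝ^d` -/
def unitCube (d : ℕ) : Set (Fin d → ℝ) := Set.univ.pi fun _ : Fin d => Set.Icc (0:ℝ) 1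

/-! ### Auxiliary material for statement5 -/

namespace Statement5Aux

/-- complex extension of `gfun` -/
def Gc : ℂ → ℂ := fun z =>
  if z = 0 then 1 else
    (1 - Complex.exp (-2 * Real.pi * Complex.I * z)) / (2 * Real.pi * Complex.I * z)

lemma two_pi_I_ne : (2 * (Real.pi : ℂ) * Complex.I) ≠ 0 := by
  simp [Real.pi_ne_zero, Complex.I_ne_zero]

lemma gfun_eq (t : ℝ) : gfun t = Gc (t : ℂ) := by
  unfold gfun Gc
  by_cases h : t = 0
  · simp [h]
  · rw [if_neg h, if_neg (by exact_mod_cast h)]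

lemma Gc_diffAt_ne {z : ℂ} (hz : z ≠ 0) : DifferentiableAt ℂ Gc z := by
  have h1 : DifferentiableAt ℂ
      (fun w => (1 - Complex.exp (-2 * Real.pi * Complex.I * w)) /
        (2 * Real.pi * Complex.I * w)) z := by
    apply DifferentiableAt.div
    · apply DifferentiableAt.sub (differentiableAt_const _)
      exact (Complex.differentiable_exp.comp
        ((differentiable_const (-2 * (Real.pi:ℂ) * Complex.I)).mul differentiable_id)) z
    · exact (differentiable_const _).mul differentiable_id |>.differentiableAt
    · exact mul_ne_zero two_pi_I_ne hz
  apply Filter.EventuallyEq.differentiableAt_iff ?_ |>.mpr h1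
  filter_upwards [compl_singleton_mem_nhds hz] with w hw
  have hw' : w ≠ 0 := hw
  simp [Gc, hw']

lemma Gc_contAt : ContinuousAt Gc 0 := by
  have h0 : Filter.Tendsto (fun w : ℂ => (Complex.exp w - 1) / w)
      (nhdsWithin (0:ℂ) {(0:ℂ)}ᶜ) (nhds 1) := by
    have h := hasDerivAt_iff_tendsto_slope.mp (Complex.hasDerivAt_exp 0)
    rw [Complex.exp_zero] at h
    have : (slope Complex.exp 0) = fun w : ℂ => (Complex.exp w - 1) / w := by
      funext w
      rw [slope_def_field, Complex.exp_zero, sub_zero]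
    rwa [this] at h
  have hmap : Filter.Tendsto (fun z : ℂ => -2 * Real.pi * Complex.I * z)
      (nhdsWithin (0:ℂ) {(0:ℂ)}ᶜ) (nhdsWithin (0:ℂ) {(0:ℂ)}ᶜ) := by
    rw [tendsto_nhdsWithin_iff]
    constructor
    · have hc : Continuous (fun z : ℂ => -2 * Real.pi * Complex.I * z) :=
        (continuous_const.mul continuous_id)
      have := hc.tendsto 0
      simpa using this.mono_left nhdsWithin_le_nhds
    · filter_upwards [self_mem_nhdsWithin] with z hz
      have hz' : z ≠ 0 := hz
      have : (-2 * (Real.pi:ℂ) * Complex.I) ≠ 0 := by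
        simp [Real.pi_ne_zero, Complex.I_ne_zero]
      exact mul_ne_zero this hz'
  have h2 : Filter.Tendsto Gc (nhdsWithin (0:ℂ) {(0:ℂ)}ᶜ) (nhds 1) := by
    have hcomp := h0.comp hmap
    apply hcomp.congr'
    filter_upwards [self_mem_nhdsWithin] with z hz
    have hz' : z ≠ 0 := hz
    show (Complex.exp (-2 * Real.pi * Complex.I * z) - 1) / (-2 * Real.pi * Complex.I * z)
        = Gc z
    rw [Gc, if_neg hz']
    rw [div_eq_div_iff]
    · ring
    · exact mul_ne_zero (by simp [Real.pi_ne_zero, Complex.I_ne_zero]) hz'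
    · exact mul_ne_zero two_pi_I_ne hz'
  have hGc0 : Gc 0 = 1 := by simp [Gc]
  unfold ContinuousAt
  rw [hGc0, ← nhdsNE_sup_pure (0:ℂ), Filter.tendsto_sup]
  exact ⟨h2, by simpa [hGc0] using tendsto_pure_nhds Gc 0⟩

lemma Gc_diff : Differentiable ℂ Gc := by
  intro z
  rcases eq_or_ne z 0 with rfl | hz
  · have hd : ∀ᶠ w in nhdsWithin (0:ℂ) {(0:ℂ)}ᶜ, DifferentiableAt ℂ Gc w :=
      eventually_nhdsWithin_of_forall (fun w hw => Gc_diffAt_ne hw)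
    exact (Complex.analyticAt_of_differentiable_on_punctured_nhds_of_continuousAt
      hd Gc_contAt).differentiableAt
  · exact Gc_diffAt_ne hz

lemma Gc_contDiff : ContDiff ℝ (⊤ : WithTop ℕ∞) Gc :=
  (Gc_diff.contDiff).restrict_scalars ℝ

lemma gfun_smooth : ContDiff ℝ (⊤ : WithTop ℕ∞) (fun t : ℝ => gfun t) := by
  have h : (fun t : ℝ => gfun t) = Gc ∘ Complex.ofReal := funext gfun_eq
  rw [h]
  exact Gc_contDiff.comp Complex.ofRealCLM.contDiff

lemma factor_smooth {d : ℕ} (w : Fin d → ℤ) :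
    ContDiff ℝ (⊤ : WithTop ℕ∞) (fun x : Fin d → ℝ => gfun (dotIR w x)) := by
  apply gfun_smooth.comp
  unfold dotIR
  exact ContDiff.sum fun i _ =>
    contDiff_const.mul (ContinuousLinearMap.proj (R := ℝ) (φ := fun _ : Fin d => ℝ) i).contDiff

lemma gfun_int (n : ℤ) (hn : n ≠ 0) : gfun (n : ℝ) = 0 := by
  rw [gfun, if_neg (by exact_mod_cast hn)]
  have h1 : Complex.exp (-2 * Real.pi * Complex.I * ((n : ℝ) : ℂ)) = 1 := by
    have h := Complex.exp_int_mul_two_pi_mul_I (-n)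
    rw [← h]
    congr 1
    push_cast
    ring
  rw [h1]
  simp

/-- vanishing order predicate: `Van a m f` means `f` is a finite sum of products of
`m` smooth functions vanishing at `a` with a smooth function. -/
inductive Van {d : ℕ} (a : Fin d → ℝ) : ℕ → ((Fin d → ℝ) → ℂ) → Prop
  | smooth {f : (Fin d → ℝ) → ℂ} : ContDiff ℝ (⊤ : WithTop ℕ∞) f → Van a 0 f
  | mul {m : ℕ} {p f : (Fin d → ℝ) → ℂ} : ContDiff ℝ (⊤ : WithTop ℕ∞) p → p a = 0 →
      Van a m f → Van a (m + 1) (p * f)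
  | add {m : ℕ} {f g : (Fin d → ℝ) → ℂ} : Van a m f → Van a m g → Van a m (f + g)
  | zero {m : ℕ} : Van a m 0

lemma Van.contDiff {d : ℕ} {a : Fin d → ℝ} {m : ℕ} {f : (Fin d → ℝ) → ℂ}
    (h : Van a m f) : ContDiff ℝ (⊤ : WithTop ℕ∞) f := by
  induction h with
  | smooth h => exact h
  | mul hp _ _ ih => exact hp.mul ih
  | add _ _ ih1 ih2 => exact ih1.add ih2
  | zero => exact contDiff_const

lemma Van.eval {d : ℕ} {a : Fin d → ℝ} {m : ℕ} {f : (Fin d → ℝ) → ℂ}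
    (h : Van a m f) : m ≠ 0 → f a = 0 := by
  induction h with
  | smooth h => intro hm; exact absurd rfl hm
  | @mul m p f hp hp0 hf ih =>
      intro _
      show p a * f a = 0
      rw [hp0, zero_mul]
  | add hf hg ih1 ih2 =>
      intro hm
      rw [Pi.add_apply, ih1 hm, ih2 hm, add_zero]
  | zero => intro _; rfl

lemma Van.smul {d : ℕ} {a : Fin d → ℝ} {m : ℕ} {c f : (Fin d → ℝ) → ℂ}
    (hc : ContDiff ℝ (⊤ : WithTop ℕ∞) c) (h : Van a m f) : Van a m (c * f) := by
  induction h with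
  | smooth hf => exact .smooth (hc.mul hf)
  | mul hp hp0 hf ih => rw [mul_left_comm]; exact .mul hp hp0 ih
  | add hf hg ih1 ih2 => rw [mul_add]; exact .add ih1 ih2
  | zero => rw [mul_zero]; exact .zero

lemma contDiff_pderivC {d : ℕ} {f : (Fin d → ℝ) → ℂ}
    (hf : ContDiff ℝ (⊤ : WithTop ℕ∞) f) (i : Fin d) :
    ContDiff ℝ (⊤ : WithTop ℕ∞) (pderivC i f) := by
  have h1 : ContDiff ℝ (⊤ : WithTop ℕ∞) (fderiv ℝ f) := hf.fderiv_right le_top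
  have h2 : ContDiff ℝ (⊤ : WithTop ℕ∞)
      (fun L : (Fin d → ℝ) →L[ℝ] ℂ => L (Pi.single i 1)) :=
    contDiff_id.clm_apply contDiff_const
  exact h2.comp h1

lemma pderivC_add {d : ℕ} {f g : (Fin d → ℝ) → ℂ} (hf : Differentiable ℝ f)
    (hg : Differentiable ℝ g) (i : Fin d) :
    pderivC i (f + g) = pderivC i f + pderivC i g := by
  funext x
  show fderiv ℝ (f + g) x (Pi.single i 1) = _
  rw [fderiv_add (hf x) (hg x)]
  rfl

lemma pderivC_mul {d : ℕ} {f g : (Fin d → ℝ) → ℂ} (hf : Differentiable ℝ f)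
    (hg : Differentiable ℝ g) (i : Fin d) :
    pderivC i (f * g) = f * pderivC i g + g * pderivC i f := by
  funext x
  show fderiv ℝ (f * g) x (Pi.single i 1) = f x * pderivC i g x + g x * pderivC i f x
  have h : fderiv ℝ (f * g) x = fderiv ℝ (fun y => f y * g y) x := rfl
  rw [h, fderiv_fun_mul (hf x) (hg x)]
  simp [pderivC, smul_eq_mul]

lemma pderivC_zero {d : ℕ} (i : Fin d) :
    pderivC i (0 : (Fin d → ℝ) → ℂ) = 0 := by
  funext x
  show fderiv ℝ (0 : (Fin d → ℝ) → ℂ) x (Pi.single i 1) = 0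
  have h : fderiv ℝ (0 : (Fin d → ℝ) → ℂ) x = fderiv ℝ (fun _ => (0:ℂ)) x := rfl
  rw [h, fderiv_fun_const]
  rfl

lemma Van.pderiv_aux {d : ℕ} {a : Fin d → ℝ} {m : ℕ} {f : (Fin d → ℝ) → ℂ}
    (h : Van a m f) (i : Fin d) :
    ∀ m', m = m' + 1 → Van a m' (pderivC i f) := by
  induction h with
  | smooth hf => intro m' hm; exact absurd hm (by omega)
  | @mul m p f hp hp0 hf ih =>
      intro m' hm
      have hm' : m' = m := by omega
      subst hm'
      have hfd : Differentiable ℝ f := hf.contDiff.differentiable (by simp)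
      have hpd : Differentiable ℝ p := hp.differentiable (by simp)
      rw [pderivC_mul hpd hfd i]
      apply Van.add
      · cases m' with
        | zero =>
            exact .smooth (hp.mul (contDiff_pderivC hf.contDiff i))
        | succ k => exact .mul hp hp0 (ih k rfl)
      · rw [mul_comm]
        exact Van.smul (contDiff_pderivC hp i) hf
  | @add m f g hf hg ih1 ih2 =>
      intro m' hm
      rw [pderivC_add (hf.contDiff.differentiable (by simp))
        (hg.contDiff.differentiable (by simp)) i]
      exact .add (ih1 m' hm) (ih2 m' hm)
  | zero =>
      intro m' hm
      rw [pderivC_zero]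
      exact .zero

lemma Van.pderiv {d : ℕ} {a : Fin d → ℝ} {m : ℕ} {f : (Fin d → ℝ) → ℂ}
    (h : Van a (m + 1) f) (i : Fin d) : Van a m (pderivC i f) :=
  h.pderiv_aux i m rfl

lemma Van.iterate {d : ℕ} {a : Fin d → ℝ} {m : ℕ} (i : Fin d) (k : ℕ) :
    ∀ {f : (Fin d → ℝ) → ℂ}, Van a (m + k) f → Van a m ((pderivC i)^[k] f) := by
  induction k with
  | zero => intro f h; simpa using h
  | succ k ih =>
      intro f h
      rw [Function.iterate_succ_apply]
      exact ih ((show Van a ((m + k) + 1) f from h).pderiv i)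

lemma Van.fold {d : ℕ} {a : Fin d → ℝ} (β : Fin d → ℕ) :
    ∀ (L : List (Fin d)) (m : ℕ) (f : (Fin d → ℝ) → ℂ),
      Van a (m + (L.map β).sum) f →
      Van a m (L.foldr (fun i F => (pderivC i)^[β i] F) f) := by
  intro L
  induction L with
  | nil => intro m f h; simpa using h
  | cons i L ih =>
      intro m f h
      rw [List.foldr_cons]
      apply Van.iterate
      apply ih
      have e : m + β i + (L.map β).sum = m + ((i :: L).map β).sum := by
        simp [List.sum_cons]
        omega
      rw [e]
      exact h

lemma Van.dmulti {d : ℕ} {a : Fin d → ℝ} {f : (Fin d → ℝ) → ℂ} (β : Fin d → ℕ)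
    (m : ℕ) (h : Van a (m + ∑ i, β i) f) : Van a m (Dmulti β f) := by
  unfold Dmulti
  apply Van.fold
  rwa [show ((List.finRange d).map β).sum = ∑ i, β i from (Fin.sum_univ_def β).symm]

lemma van_prod {d : ℕ} {ι : Type*} {a : Fin d → ℝ} (U : Finset ι)
    (h : ι → (Fin d → ℝ) → ℂ) (hs : ∀ j, ContDiff ℝ (⊤ : WithTop ℕ∞) (h j))
    (hv : ∀ j ∈ U, h j a = 0) : Van a U.card (∏ j ∈ U, h j) := by
  classical
  induction U using Finset.induction with
  | empty =>
      simp only [Finset.prod_empty, Finset.card_empty]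
      exact Van.smooth contDiff_const
  | @insert j s hj ih =>
      rw [Finset.prod_insert hj, Finset.card_insert_of_notMem hj]
      exact Van.mul (hs j) (hv j (Finset.mem_insert_self j s))
        (ih fun j' hj' => hv j' (Finset.mem_insert_of_mem hj'))

lemma smooth_prod {d : ℕ} {ι : Type*} (T : Finset ι) (h : ι → (Fin d → ℝ) → ℂ)
    (hs : ∀ j, ContDiff ℝ (⊤ : WithTop ℕ∞) (h j)) :
    ContDiff ℝ (⊤ : WithTop ℕ∞) (∏ j ∈ T, h j) :=
  Finset.prod_induction h (ContDiff ℝ (⊤ : WithTop ℕ∞))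
    (fun _ _ ha hb => ha.mul hb) contDiff_const (fun j _ => hs j)

end Statement5Aux

open Statement5Aux in
/-- Lemma 2.2: if `D^β B̂_V(α) ≠ 0` with `|β| = ϱ_V+1` and `#U_α ≥ ϱ_V+1`,
then `#U_α = ϱ_V+1`. -/
theorem statement5 {d : ℕ} {ι : Type*} (V : Finset ι) (v : ι → Fin d → ℤ)
    (hadm : Admissible V v) (huni : Unimodular V v)
    (α : Fin d → ℤ) (hα : α ≠ 0)
    (β : Fin d → ℕ) (hβ : ∑ i, β i = rhoV V v + 1)
    (hD : Dmulti β (hatB V v) (castV α) ≠ 0)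
    (hcard : rhoV V v + 1 ≤ (V.filter fun j => dotII α (v j) ≠ 0).card) :
    (V.filter fun j => dotII α (v j) ≠ 0).card = rhoV V v + 1 := by
  classical
  by_contra hne
  set U := V.filter fun j => dotII α (v j) ≠ 0 with hUdef
  have hge : rhoV V v + 2 ≤ U.card := by omega
  have hfun : hatB V v = ∏ j ∈ V, (fun x => gfun (dotIR (v j) x)) := by
    funext x
    rw [Finset.prod_apply]
    rfl
  have hsm : ∀ j : ι, ContDiff ℝ (⊤ : WithTop ℕ∞) (fun x => gfun (dotIR (v j) x)) :=
    fun j => factor_smooth (v j)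
  have hvan : ∀ j ∈ U, (fun x => gfun (dotIR (v j) x)) (castV α) = 0 := by
    intro j hj
    have hjne : dotII α (v j) ≠ 0 := (Finset.mem_filter.mp hj).2
    have hdot : dotIR (v j) (castV α) = ((dotII α (v j) : ℤ) : ℝ) := by
      unfold dotIR dotII castV
      push_cast
      exact Finset.sum_congr rfl fun i _ => mul_comm _ _
    show gfun (dotIR (v j) (castV α)) = 0
    rw [hdot]
    exact gfun_int _ hjne
  have hVan : Van (castV α) U.card (hatB V v) := by
    rw [hfun, ← Finset.prod_sdiff (Finset.filter_subset _ V : U ⊆ V)]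
    exact Van.smul (smooth_prod _ _ hsm) (van_prod U _ hsm hvan)
  have h1 : Van (castV α) (U.card - (rhoV V v + 1)) (Dmulti β (hatB V v)) := by
    apply Van.dmulti
    rw [hβ]
    rw [show U.card - (rhoV V v + 1) + (rhoV V v + 1) = U.card by omega]
    exact hVan
  exact hD (h1.eval (by omega))

end
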